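/- Let a, b, c be positive real numbers satisfying the strict triangle inequalities a < b + c, b < a + c, c < a + b together with a + b + c < 2π. Then 2·sin(a/2)·sin(b/2)·sin(c/2)/(sin((a+b-c)/2)·sin((a+c-b)/2)·sin((b+c-a)/2)) ≥ 2·sin((a+b)/4)·sin((a+c)/4)·sin((b+c)/4)/(sin(a/2)·sin(b/2)·sin(c/2)) ≥ 2, with equality throughout if and only if a = b = c. -/
import Mathlib

open Real

set_option maxHeartbeats 4000000

private lemma sin_mul_sin (M D : ℝ) :
    Real.sin (M + D) * Real.sin (M - D) = Real.sin M ^ 2 - Real.sin D ^ 2 := by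
  rw [Real.sin_add, Real.sin_sub]
  have h1 := Real.sin_sq_add_cos_sq M
  have h2 := Real.sin_sq_add_cos_sq D
  linear_combination Real.sin M ^ 2 * h2 - Real.sin D ^ 2 * h1

private lemma sin_add_sin' (x y : ℝ) :
    Real.sin x + Real.sin y = 2 * Real.sin ((x + y) / 2) * Real.cos ((x - y) / 2) := by
  have hx : Real.sin x = Real.sin ((x + y) / 2 + (x - y) / 2) :=
    congrArg Real.sin (by ring)
  have hy : Real.sin y = Real.sin ((x + y) / 2 - (x - y) / 2) :=
    congrArg Real.sin (by ring)
  rw [hx, hy, Real.sin_add, Real.sin_sub]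
  ring

private lemma sin_tri (x y z : ℝ) (hx : 0 < x) (hy : 0 < y) (hz : 0 < z)
    (hx2 : x < π / 2) (hy2 : y < π / 2) (hz2 : z < π / 2) (hzxy : z < x + y) :
    Real.sin z ≤ Real.sin x + Real.sin y := by
  have hπ := Real.pi_pos
  have hsx : 0 ≤ Real.sin x := (Real.sin_pos_of_pos_of_lt_pi hx (by linarith)).le
  have hsy : 0 ≤ Real.sin y := (Real.sin_pos_of_pos_of_lt_pi hy (by linarith)).le
  by_cases hcase : x + y ≤ π / 2
  · have h1 : Real.sin z ≤ Real.sin (x + y) := by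
      apply Real.strictMonoOn_sin.monotoneOn ?_ ?_ hzxy.le
      · exact ⟨by linarith, by linarith⟩
      · exact ⟨by linarith, by linarith⟩
    have h2 : Real.sin (x + y) ≤ Real.sin x + Real.sin y := by
      rw [Real.sin_add]
      nlinarith [Real.cos_le_one x, Real.cos_le_one y]
    linarith
  · push_neg at hcase
    have hM : Real.sin (π / 4) ≤ Real.sin ((x + y) / 2) := by
      apply Real.strictMonoOn_sin.monotoneOn ?_ ?_ (by linarith)
      · exact ⟨by linarith, by linarith⟩
      · exact ⟨by linarith, by linarith⟩
    have habs : |(x - y) / 2| ≤ π / 4 := abs_le.mpr ⟨by linarith, by linarith⟩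
    have hD : Real.cos (π / 4) ≤ Real.cos ((x - y) / 2) := by
      calc Real.cos (π / 4) ≤ Real.cos |(x - y) / 2| :=
            Real.cos_le_cos_of_nonneg_of_le_pi (abs_nonneg _) (by linarith) habs
        _ = Real.cos ((x - y) / 2) := Real.cos_abs _
    have e4 := sin_add_sin' x y
    have h2 : Real.sqrt 2 ^ 2 = 2 := Real.sq_sqrt (by norm_num)
    have hs2 : 0 ≤ Real.sqrt 2 := Real.sqrt_nonneg 2
    rw [Real.sin_pi_div_four] at hM
    rw [Real.cos_pi_div_four] at hD
    have hz1 : Real.sin z ≤ 1 := Real.sin_le_one z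
    nlinarith [hM, hD, e4, h2, hs2, hz1]

private lemma key (x y z : ℝ) (hz0 : 0 ≤ Real.sin z)
    (htri : Real.sin z ≤ Real.sin x + Real.sin y) :
    Real.sin ((x + y) / 2) ^ 2 * (Real.sin (x + z - y) * Real.sin (y + z - x)) ≤
      Real.sin x * Real.sin y * Real.sin z ^ 2 := by
  have e1 : Real.sin x * Real.sin y =
      Real.sin ((x + y) / 2) ^ 2 - Real.sin ((x - y) / 2) ^ 2 := by
    have h := sin_mul_sin ((x + y) / 2) ((x - y) / 2)
    rw [show (x + y) / 2 + (x - y) / 2 = x by ring,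
        show (x + y) / 2 - (x - y) / 2 = y by ring] at h
    exact h
  have e2 : Real.sin (x + z - y) * Real.sin (y + z - x) =
      Real.sin z ^ 2 - Real.sin (x - y) ^ 2 := by
    have h := sin_mul_sin z (x - y)
    rw [show z + (x - y) = x + z - y by ring, show z - (x - y) = y + z - x by ring] at h
    exact h
  have e3 : Real.sin (x - y) = 2 * Real.sin ((x - y) / 2) * Real.cos ((x - y) / 2) := by
    have h := Real.sin_two_mul ((x - y) / 2)
    rw [show 2 * ((x - y) / 2) = x - y by ring] at h
    exact h
  have e4 := sin_add_sin' x y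
  have e5 : Real.sin ((x + y) / 2) ^ 2 * Real.sin (x - y) ^ 2 =
      Real.sin ((x - y) / 2) ^ 2 * (Real.sin x + Real.sin y) ^ 2 := by
    rw [e3, e4]; ring
  have hfac : 0 ≤ Real.sin ((x - y) / 2) ^ 2 *
      ((Real.sin x + Real.sin y) ^ 2 - Real.sin z ^ 2) :=
    mul_nonneg (sq_nonneg _) (by nlinarith)
  nlinarith [e1, e2, e5, hfac]


private lemma le_of_sq_le_sq' {x y : ℝ} (hx : 0 ≤ x) (hy : 0 ≤ y) (h : x ^ 2 ≤ y ^ 2) :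
    x ≤ y := by nlinarith

private lemma cube_step {A B C D E F : ℝ} (hA : 0 < A) (hB : 0 < B) (hC : 0 < C)
    (h1 : A ≤ D) (h2 : B ≤ E) (h3 : C ≤ F) : A * B * C ≤ D * E * F := by
  have hD := hA.trans_le h1
  have hE := hB.trans_le h2
  exact mul_le_mul (mul_le_mul h1 h2 hB.le hD.le) h3 hC.le (mul_pos hD hE).le

private lemma main_ineq {sa sb sc ta tb tc mab mac mbc : ℝ}
    (hsa : 0 < sa) (hsb : 0 < sb) (hsc : 0 < sc)
    (hta : 0 < ta) (htb : 0 < tb) (htc : 0 < tc)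
    (hmab : 0 < mab) (hmac : 0 < mac) (hmbc : 0 < mbc)
    (Ka : mbc ^ 2 * (tc * tb) ≤ sb * sc * sa ^ 2)
    (Kb : mac ^ 2 * (tc * ta) ≤ sa * sc * sb ^ 2)
    (Kc : mab ^ 2 * (tb * ta) ≤ sa * sb * sc ^ 2) :
    mab * mac * mbc * (tc * tb * ta) ≤ (sa * sb * sc) ^ 2 := by
  have H : (mbc ^ 2 * (tc * tb)) * (mac ^ 2 * (tc * ta)) * (mab ^ 2 * (tb * ta)) ≤
      (sb * sc * sa ^ 2) * (sa * sc * sb ^ 2) * (sa * sb * sc ^ 2) :=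
    cube_step (by positivity) (by positivity) (by positivity) Ka Kb Kc
  have hsq : (mab * mac * mbc * (tc * tb * ta)) ^ 2 ≤ ((sa * sb * sc) ^ 2) ^ 2 := by
    calc (mab * mac * mbc * (tc * tb * ta)) ^ 2
        = (mbc ^ 2 * (tc * tb)) * (mac ^ 2 * (tc * ta)) * (mab ^ 2 * (tb * ta)) := by ring
      _ ≤ (sb * sc * sa ^ 2) * (sa * sc * sb ^ 2) * (sa * sb * sc ^ 2) := H
      _ = ((sa * sb * sc) ^ 2) ^ 2 := by ring
  exact le_of_sq_le_sq' (by positivity) (by positivity) hsq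

private lemma mid_ineq {sa sb sc mab mac mbc : ℝ}
    (hsa : 0 < sa) (hsb : 0 < sb) (hsc : 0 < sc)
    (hmab : 0 < mab) (hmac : 0 < mac) (hmbc : 0 < mbc)
    (h1 : sa * sb ≤ mab ^ 2) (h2 : sa * sc ≤ mac ^ 2) (h3 : sb * sc ≤ mbc ^ 2) :
    sa * sb * sc ≤ mab * mac * mbc := by
  have H : (sa * sb) * (sa * sc) * (sb * sc) ≤ mab ^ 2 * mac ^ 2 * mbc ^ 2 :=
    cube_step (by positivity) (by positivity) (by positivity) h1 h2 h3
  have hsq : (sa * sb * sc) ^ 2 ≤ (mab * mac * mbc) ^ 2 := by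
    calc (sa * sb * sc) ^ 2 = (sa * sb) * (sa * sc) * (sb * sc) := by ring
      _ ≤ mab ^ 2 * mac ^ 2 * mbc ^ 2 := H
      _ = (mab * mac * mbc) ^ 2 := by ring
  exact le_of_sq_le_sq' (by positivity) (by positivity) hsq

private lemma eq_case {sa sb sc mab mac mbc : ℝ}
    (hsa : 0 < sa) (hsb : 0 < sb) (hsc : 0 < sc)
    (hmab : 0 < mab) (hmac : 0 < mac) (hmbc : 0 < mbc)
    (h1 : sa * sb ≤ mab ^ 2) (h2 : sa * sc ≤ mac ^ 2) (h3 : sb * sc ≤ mbc ^ 2)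
    (heq : mab * mac * mbc = sa * sb * sc) :
    sa * sb = mab ^ 2 ∧ sb * sc = mbc ^ 2 := by
  have hsq : mab ^ 2 * (mac ^ 2 * mbc ^ 2) =
      (sa * sb) * ((sa * sc) * (sb * sc)) := by
    linear_combination (mab * mac * mbc + sa * sb * sc) * heq
  have h23 : (sa * sc) * (sb * sc) ≤ mac ^ 2 * mbc ^ 2 :=
    mul_le_mul h2 h3 (by positivity) (by positivity)
  have h12 : (sa * sb) * (sa * sc) ≤ mab ^ 2 * mac ^ 2 :=
    mul_le_mul h1 h2 (by positivity) (by positivity)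
  constructor
  · have : mab ^ 2 ≤ sa * sb := by
      nlinarith [hsq, h23, mul_pos hsa hsb, mul_pos (mul_pos hmac hmac) (mul_pos hmbc hmbc)]
    linarith
  · have hsq2 : mbc ^ 2 * (mab ^ 2 * mac ^ 2) =
        (sb * sc) * ((sa * sb) * (sa * sc)) := by linear_combination hsq
    have : mbc ^ 2 ≤ sb * sc := by
      nlinarith [hsq2, h12, mul_pos hsb hsc, mul_pos (mul_pos hmab hmab) (mul_pos hmac hmac)]
    linarith

theorem stmt_10 (a b c : ℝ) (ha : 0 < a) (hb : 0 < b) (hc : 0 < c)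
    (hab : a < b + c) (hbc : b < a + c) (hca : c < a + b)
    (hsum : a + b + c < 2 * Real.pi) :
    2 * Real.sin (a / 2) * Real.sin (b / 2) * Real.sin (c / 2) /
        (Real.sin ((a + b - c) / 2) * Real.sin ((a + c - b) / 2) *
          Real.sin ((b + c - a) / 2)) ≥
      2 * Real.sin ((a + b) / 4) * Real.sin ((a + c) / 4) * Real.sin ((b + c) / 4) /
        (Real.sin (a / 2) * Real.sin (b / 2) * Real.sin (c / 2)) ∧
    2 * Real.sin ((a + b) / 4) * Real.sin ((a + c) / 4) * Real.sin ((b + c) / 4) /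
        (Real.sin (a / 2) * Real.sin (b / 2) * Real.sin (c / 2)) ≥ 2 ∧
    ((2 * Real.sin (a / 2) * Real.sin (b / 2) * Real.sin (c / 2) /
        (Real.sin ((a + b - c) / 2) * Real.sin ((a + c - b) / 2) *
          Real.sin ((b + c - a) / 2)) =
      2 * Real.sin ((a + b) / 4) * Real.sin ((a + c) / 4) * Real.sin ((b + c) / 4) /
        (Real.sin (a / 2) * Real.sin (b / 2) * Real.sin (c / 2)) ∧
      2 * Real.sin ((a + b) / 4) * Real.sin ((a + c) / 4) * Real.sin ((b + c) / 4) /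
        (Real.sin (a / 2) * Real.sin (b / 2) * Real.sin (c / 2)) = 2) ↔
      a = b ∧ b = c) := by
  have hπ := Real.pi_pos
  have haπ : a < π := by linarith
  have hbπ : b < π := by linarith
  have hcπ : c < π := by linarith
  have hsa : 0 < Real.sin (a / 2) := Real.sin_pos_of_pos_of_lt_pi (by linarith) (by linarith)
  have hsb : 0 < Real.sin (b / 2) := Real.sin_pos_of_pos_of_lt_pi (by linarith) (by linarith)
  have hsc : 0 < Real.sin (c / 2) := Real.sin_pos_of_pos_of_lt_pi (by linarith) (by linarith)
  have hta : 0 < Real.sin ((b + c - a) / 2) :=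
    Real.sin_pos_of_pos_of_lt_pi (by linarith) (by linarith)
  have htb : 0 < Real.sin ((a + c - b) / 2) :=
    Real.sin_pos_of_pos_of_lt_pi (by linarith) (by linarith)
  have htc : 0 < Real.sin ((a + b - c) / 2) :=
    Real.sin_pos_of_pos_of_lt_pi (by linarith) (by linarith)
  have hmab : 0 < Real.sin ((a + b) / 4) :=
    Real.sin_pos_of_pos_of_lt_pi (by linarith) (by linarith)
  have hmac : 0 < Real.sin ((a + c) / 4) :=
    Real.sin_pos_of_pos_of_lt_pi (by linarith) (by linarith)
  have hmbc : 0 < Real.sin ((b + c) / 4) :=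
    Real.sin_pos_of_pos_of_lt_pi (by linarith) (by linarith)
  -- key instances
  have Ka := key (b / 2) (c / 2) (a / 2) hsa.le
    (sin_tri (b / 2) (c / 2) (a / 2) (by linarith) (by linarith) (by linarith)
      (by linarith) (by linarith) (by linarith) (by linarith))
  rw [show (b / 2 + c / 2) / 2 = (b + c) / 4 by ring,
      show b / 2 + a / 2 - c / 2 = (a + b - c) / 2 by ring,
      show c / 2 + a / 2 - b / 2 = (a + c - b) / 2 by ring] at Ka
  have Kb := key (a / 2) (c / 2) (b / 2) hsb.le
    (sin_tri (a / 2) (c / 2) (b / 2) (by linarith) (by linarith) (by linarith)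
      (by linarith) (by linarith) (by linarith) (by linarith))
  rw [show (a / 2 + c / 2) / 2 = (a + c) / 4 by ring,
      show a / 2 + b / 2 - c / 2 = (a + b - c) / 2 by ring,
      show c / 2 + b / 2 - a / 2 = (b + c - a) / 2 by ring] at Kb
  have Kc := key (a / 2) (b / 2) (c / 2) hsc.le
    (sin_tri (a / 2) (b / 2) (c / 2) (by linarith) (by linarith) (by linarith)
      (by linarith) (by linarith) (by linarith) (by linarith))
  rw [show (a / 2 + b / 2) / 2 = (a + b) / 4 by ring,
      show a / 2 + c / 2 - b / 2 = (a + c - b) / 2 by ring,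
      show b / 2 + c / 2 - a / 2 = (b + c - a) / 2 by ring] at Kc
  have hMT : Real.sin ((a + b) / 4) * Real.sin ((a + c) / 4) * Real.sin ((b + c) / 4) *
      (Real.sin ((a + b - c) / 2) * Real.sin ((a + c - b) / 2) * Real.sin ((b + c - a) / 2)) ≤
      (Real.sin (a / 2) * Real.sin (b / 2) * Real.sin (c / 2)) ^ 2 :=
    main_ineq hsa hsb hsc hta htb htc hmab hmac hmbc Ka Kb Kc
  -- pairwise middle inequalities
  have eab : Real.sin (a / 2) * Real.sin (b / 2) =
      Real.sin ((a + b) / 4) ^ 2 - Real.sin ((a - b) / 4) ^ 2 := by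
    have h := sin_mul_sin ((a + b) / 4) ((a - b) / 4)
    rw [show (a + b) / 4 + (a - b) / 4 = a / 2 by ring,
        show (a + b) / 4 - (a - b) / 4 = b / 2 by ring] at h
    exact h
  have eac : Real.sin (a / 2) * Real.sin (c / 2) =
      Real.sin ((a + c) / 4) ^ 2 - Real.sin ((a - c) / 4) ^ 2 := by
    have h := sin_mul_sin ((a + c) / 4) ((a - c) / 4)
    rw [show (a + c) / 4 + (a - c) / 4 = a / 2 by ring,
        show (a + c) / 4 - (a - c) / 4 = c / 2 by ring] at h
    exact h
  have ebc : Real.sin (b / 2) * Real.sin (c / 2) =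
      Real.sin ((b + c) / 4) ^ 2 - Real.sin ((b - c) / 4) ^ 2 := by
    have h := sin_mul_sin ((b + c) / 4) ((b - c) / 4)
    rw [show (b + c) / 4 + (b - c) / 4 = b / 2 by ring,
        show (b + c) / 4 - (b - c) / 4 = c / 2 by ring] at h
    exact h
  have h1 : Real.sin (a / 2) * Real.sin (b / 2) ≤ Real.sin ((a + b) / 4) ^ 2 := by
    nlinarith [eab, sq_nonneg (Real.sin ((a - b) / 4))]
  have h2 : Real.sin (a / 2) * Real.sin (c / 2) ≤ Real.sin ((a + c) / 4) ^ 2 := by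
    nlinarith [eac, sq_nonneg (Real.sin ((a - c) / 4))]
  have h3 : Real.sin (b / 2) * Real.sin (c / 2) ≤ Real.sin ((b + c) / 4) ^ 2 := by
    nlinarith [ebc, sq_nonneg (Real.sin ((b - c) / 4))]
  have hPM : Real.sin (a / 2) * Real.sin (b / 2) * Real.sin (c / 2) ≤
      Real.sin ((a + b) / 4) * Real.sin ((a + c) / 4) * Real.sin ((b + c) / 4) :=
    mid_ineq hsa hsb hsc hmab hmac hmbc h1 h2 h3
  refine ⟨?_, ?_, ?_⟩
  · rw [ge_iff_le, div_le_div_iff₀ (mul_pos (mul_pos hsa hsb) hsc)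
      (mul_pos (mul_pos htc htb) hta)]
    nlinarith [hMT]
  · rw [ge_iff_le, le_div_iff₀ (mul_pos (mul_pos hsa hsb) hsc)]
    nlinarith [hPM]
  · constructor
    · rintro ⟨-, h2eq⟩
      rw [div_eq_iff (mul_pos (mul_pos hsa hsb) hsc).ne'] at h2eq
      have hMeq : Real.sin ((a + b) / 4) * Real.sin ((a + c) / 4) * Real.sin ((b + c) / 4) =
          Real.sin (a / 2) * Real.sin (b / 2) * Real.sin (c / 2) := by linarith
      obtain ⟨q1, q3⟩ := eq_case hsa hsb hsc hmab hmac hmbc h1 h2 h3 hMeq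
      have dab : Real.sin ((a - b) / 4) = 0 := by
        have : Real.sin ((a - b) / 4) ^ 2 = 0 := by linarith [eab, q1]
        exact pow_eq_zero_iff (two_ne_zero) |>.mp this
      have dbc : Real.sin ((b - c) / 4) = 0 := by
        have : Real.sin ((b - c) / 4) ^ 2 = 0 := by linarith [ebc, q3]
        exact pow_eq_zero_iff (two_ne_zero) |>.mp this
      have hab' : a = b := by
        have h := (Real.sin_eq_zero_iff_of_lt_of_lt
          (by linarith : -π < (a - b) / 4) (by linarith : (a - b) / 4 < π)).mp dab
        linarith
      have hbc' : b = c := by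
        have h := (Real.sin_eq_zero_iff_of_lt_of_lt
          (by linarith : -π < (b - c) / 4) (by linarith : (b - c) / 4 < π)).mp dbc
        linarith
      exact ⟨hab', hbc'⟩
    · rintro ⟨h1eq, h2eq⟩
      subst h1eq
      subst h2eq
      rw [show (a + a - a) / 2 = a / 2 by ring, show (a + a) / 4 = a / 2 by ring]
      constructor
      · rfl
      · rw [div_eq_iff (mul_pos (mul_pos hsa hsa) hsa).ne']
        ring
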